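/- Let S be the unilateral shift on ℓ₂ and p_S = 1 - SS*. For every k ≥ 1, the k-th power of the block unitary [[S, p_S], [0, S*]] has the form [[Sᵏ, A], [0, S*ᵏ]] where A is a partial isometry with initial and final space equal to the range of p_{Sᵏ} = 1 - SᵏS*ᵏ. -/

import Mathlib

set_option linter.unusedSectionVars false
open scoped InnerProductSpace

/-- The block operator $\begin{pmatrix} a & b \\ c & d\end{pmatrix}$ on `H ⊕ H`
(the Hilbert space direct sum `WithLp 2 (H × H)`). -/
noncomputable def blockOp {H : Type*} [NormedAddCommGroup H] [InnerProductSpace ℂ H]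
    [CompleteSpace H] (a b c d : H →L[ℂ] H) :
    WithLp 2 (H × H) →L[ℂ] WithLp 2 (H × H) :=
  ((WithLp.prodContinuousLinearEquiv 2 ℂ H H).symm.toContinuousLinearMap).comp
    ((((a.comp (ContinuousLinearMap.fst ℂ H H)) + (b.comp (ContinuousLinearMap.snd ℂ H H))).prod
      ((c.comp (ContinuousLinearMap.fst ℂ H H)) + (d.comp (ContinuousLinearMap.snd ℂ H H)))).comp
      (WithLp.prodContinuousLinearEquiv 2 ℂ H H).toContinuousLinearMap)

/-- `v` is a partial isometry iff `v*v` is an (orthogonal) projection. -/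
def IsPartialIsometry {H : Type*} [NormedAddCommGroup H] [InnerProductSpace ℂ H]
    [CompleteSpace H] (v : H →L[ℂ] H) : Prop :=
  IsIdempotentElem (star v * v)

section Aux

variable {H : Type*} [NormedAddCommGroup H] [InnerProductSpace ℂ H] [CompleteSpace H]

lemma wlp_symm_id (x : H × H) : (WithLp.equiv 2 (H × H)).symm x = WithLp.toLp 2 x := rfl
lemma wlp_id (x : WithLp 2 (H × H)) : WithLp.toLp 2 (x.fst, x.snd) = x := rfl

lemma blockOp_one : blockOp (H := H) 1 0 0 1 = 1 := by
  ext x : 1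
  simp [blockOp, wlp_symm_id, wlp_id]

lemma blockOp_mul (a b c d a' b' c' d' : H →L[ℂ] H) :
    blockOp a b c d * blockOp a' b' c' d' =
      blockOp (a*a' + b*c') (a*b' + b*d') (c*a' + d*c') (c*b' + d*d') := by
  ext x : 1
  simp [blockOp, wlp_symm_id, wlp_id, ContinuousLinearMap.mul_apply, map_add,
    add_assoc, add_comm, add_left_comm]

variable (e : HilbertBasis ℕ ℂ H)

lemma op_ext {T U : H →L[ℂ] H} (h : ∀ i, T (e i) = U (e i)) : T = U := by
  refine ContinuousLinearMap.ext_on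
    (Submodule.dense_iff_topologicalClosure_eq_top.mpr e.dense_span) ?_
  rintro x ⟨i, rfl⟩; exact h i

lemma vec_ext {x y : H} (h : ∀ i, ⟪e i, x⟫_ℂ = ⟪e i, y⟫_ℂ) : x = y := by
  apply e.repr.injective
  ext i
  simpa [e.repr_apply_apply] using h i

lemma inner_ee (i j : ℕ) : ⟪e i, e j⟫_ℂ = if i = j then 1 else 0 :=
  orthonormal_iff_ite.mp e.orthonormal i j

variable {S : H →L[ℂ] H} (hS : ∀ i : ℕ, S (e i) = e (i + 1))
include hS

lemma starS_apply (i : ℕ) : star S (e i) = if i = 0 then 0 else e (i - 1) := by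
  apply vec_ext e
  intro j
  rw [show ⟪e j, star S (e i)⟫_ℂ = ⟪S (e j), e i⟫_ℂ by
    rw [ContinuousLinearMap.star_eq_adjoint, ContinuousLinearMap.adjoint_inner_right]]
  rw [hS, inner_ee]
  rcases i with _ | i
  · simp [inner_ee]
  · simp only [Nat.succ_ne_zero, if_false, Nat.succ_sub_one, inner_ee]
    exact if_congr (by omega) rfl rfl

lemma pow_S_apply (m i : ℕ) : (S ^ m) (e i) = e (i + m) := by
  induction m with
  | zero => simp
  | succ m ih =>
    rw [pow_succ', ContinuousLinearMap.mul_apply, ih, hS, Nat.add_assoc]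

lemma pow_starS_apply (m i : ℕ) : (star S ^ m) (e i) = if m ≤ i then e (i - m) else 0 := by
  induction m generalizing i with
  | zero => simp
  | succ m ih =>
    rw [pow_succ, ContinuousLinearMap.mul_apply, starS_apply e hS]
    rcases i with _ | i
    · simp
    · simp only [Nat.succ_ne_zero, if_false, Nat.succ_sub_one, ih]
      by_cases h : m ≤ i
      · rw [if_pos h, if_pos (by omega), show i + 1 - (m + 1) = i - m from by omega]
      · rw [if_neg h, if_neg (by omega)]

lemma proj_apply (k i : ℕ) :
    (1 - S ^ k * star S ^ k) (e i) = if i < k then e i else 0 := by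
  rw [ContinuousLinearMap.sub_apply, ContinuousLinearMap.one_apply,
    ContinuousLinearMap.mul_apply, pow_starS_apply e hS]
  by_cases h : k ≤ i
  · rw [if_pos h, pow_S_apply e hS, if_neg (by omega)]
    rw [show i - k + k = i by omega, sub_self]
  · rw [if_neg h, map_zero, sub_zero, if_pos (by omega)]

/-- The off-diagonal entry. -/
noncomputable def AOp (S : H →L[ℂ] H) (k : ℕ) : H →L[ℂ] H :=
  ∑ j ∈ Finset.range k, S ^ j * (1 - S * star S) * star S ^ (k - 1 - j)

lemma p_apply (i : ℕ) : (1 - S * star S) (e i) = if i = 0 then e 0 else 0 := by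
  rw [ContinuousLinearMap.sub_apply, ContinuousLinearMap.one_apply,
    ContinuousLinearMap.mul_apply, starS_apply e hS]
  rcases i with _ | i
  · simp
  · simp [hS, Nat.succ_sub_one]

lemma AOp_apply (k i : ℕ) :
    AOp S k (e i) = if i < k then e (k - 1 - i) else 0 := by
  rw [AOp, ContinuousLinearMap.sum_apply]
  have hterm : ∀ j ∈ Finset.range k,
      (S ^ j * (1 - S * star S) * star S ^ (k - 1 - j)) (e i) =
        if j = k - 1 - i ∧ i < k then e j else 0 := by
    intro j hj
    rw [Finset.mem_range] at hj
    rw [ContinuousLinearMap.mul_apply, ContinuousLinearMap.mul_apply,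
      pow_starS_apply e hS]
    by_cases h : k - 1 - j ≤ i
    · rw [if_pos h, p_apply e hS]
      by_cases h2 : i - (k - 1 - j) = 0
      · rw [if_pos h2, if_pos (by omega), pow_S_apply e hS, Nat.zero_add]
      · rw [if_neg h2, map_zero, if_neg (by omega)]
    · rw [if_neg h, map_zero, map_zero, if_neg (by omega)]
  rw [Finset.sum_congr rfl hterm]
  by_cases hik : i < k
  · simp only [hik, and_true]
    rw [Finset.sum_ite_eq' (Finset.range k) (k - 1 - i) (fun j => e j)]
    simp [Finset.mem_range.mpr (show k - 1 - i < k by omega)]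
  · simp [hik]

lemma star_p : star (1 - S * star S) = 1 - S * star S := by
  simp [star_sub, star_mul]

omit hS in
lemma star_AOp_of (k : ℕ) (hS : ∀ i : ℕ, S (e i) = e (i + 1)) :
    star (AOp S k) = AOp S k := by
  rw [AOp, star_sum]
  have : ∀ j ∈ Finset.range k,
      star (S ^ j * (1 - S * star S) * star S ^ (k - 1 - j)) =
        S ^ (k - 1 - j) * (1 - S * star S) * star S ^ (k - 1 - (k - 1 - j)) := by
    intro j hj
    rw [Finset.mem_range] at hj
    rw [star_mul, star_mul, star_pow, star_pow, star_star, star_p e hS]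
    rw [show k - 1 - (k - 1 - j) = j by omega]
    rw [mul_assoc]
  rw [Finset.sum_congr rfl this]
  exact Finset.sum_range_reflect (fun j => S ^ j * (1 - S * star S) * star S ^ (k - 1 - j)) k

lemma AOp_mul_AOp (k : ℕ) : AOp S k * AOp S k = 1 - S ^ k * star S ^ k := by
  apply op_ext e
  intro i
  rw [ContinuousLinearMap.mul_apply, AOp_apply e hS, proj_apply e hS]
  by_cases h : i < k
  · rw [if_pos h, if_pos h, AOp_apply e hS, if_pos (by omega),
      show k - 1 - (k - 1 - i) = i from by omega]
  · rw [if_neg h, if_neg h, map_zero]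

lemma proj_idem (k : ℕ) :
    IsIdempotentElem (1 - S ^ k * star S ^ k) := by
  apply op_ext e
  intro i
  rw [ContinuousLinearMap.mul_apply, proj_apply e hS]
  by_cases h : i < k
  · rw [if_pos h, proj_apply e hS, if_pos h]
  · rw [if_neg h, map_zero]

end Aux

/-- `S` is the unilateral shift with respect to an orthonormal basis `(e_i)` of `ℓ₂`:
`S e_i = e_{i+1}`. For every `k ≥ 1`, the `k`-th power of `[[S, p_S], [0, S*]]` is of
the form `[[S^k, A], [0, S*^k]]` with `A` a partial isometry whose initial and final
space is the range of `p_{S^k} = 1 - S^k S*^k`. -/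
theorem pow_of_shift_block_unitary
    (H : Type*) [NormedAddCommGroup H] [InnerProductSpace ℂ H] [CompleteSpace H]
    (e : HilbertBasis ℕ ℂ H) (S : H →L[ℂ] H) (hS : ∀ i : ℕ, S (e i) = e (i + 1))
    (k : ℕ) (hk : 1 ≤ k) :
    ∃ A : H →L[ℂ] H,
      blockOp S (1 - S * star S) 0 (star S) ^ k =
        blockOp (S ^ k) A 0 (star S ^ k) ∧
      IsPartialIsometry A ∧
      Set.range ⇑(star A * A) = Set.range ⇑(1 - S ^ k * star S ^ k) ∧
      Set.range ⇑(A * star A) = Set.range ⇑(1 - S ^ k * star S ^ k) := by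
  refine ⟨AOp S k, ?_, ?_, ?_, ?_⟩
  · -- block power formula
    clear hk
    induction k with
    | zero => simp [AOp, blockOp_one]
    | succ k ih =>
      rw [pow_succ, ih, blockOp_mul]
      have hA : AOp S (k + 1) = (S ^ k * (1 - S * star S) + AOp S k * star S) := by
        rw [AOp, Finset.sum_range_succ]
        have : ∀ j ∈ Finset.range k,
            S ^ j * (1 - S * star S) * star S ^ (k + 1 - 1 - j) =
              S ^ j * (1 - S * star S) * star S ^ (k - 1 - j) * star S := by
          intro j hj
          rw [Finset.mem_range] at hj
          rw [show k + 1 - 1 - j = (k - 1 - j) + 1 by omega, pow_succ]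
          simp only [mul_assoc]
        rw [Finset.sum_congr rfl this, ← Finset.sum_mul, ← AOp]
        simp [add_comm]
      rw [hA]
      congr 1 <;> simp [pow_succ, mul_assoc]
  · unfold IsPartialIsometry
    rw [star_AOp_of e k hS, AOp_mul_AOp e hS]
    exact proj_idem e hS k
  · rw [star_AOp_of e k hS, AOp_mul_AOp e hS]
  · rw [star_AOp_of e k hS, AOp_mul_AOp e hS]
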